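/- If γ₁²-4ω₁² > 0, γ₂²-4ω₂² > 0, and 8(ω₁²+ω₂²) < (γ₁+γ₂)², then there exists K > 0 such that for all k > K the matrix Q(k) has exactly two distinct real eigenvalues and one pair of non-real complex conjugate eigenvalues. -/

import Mathlib

open Polynomial

private lemma my_esymm_one {R : Type*} [CommRing R] (s : Multiset R) :
    s.esymm 1 = s.sum := by
  simp [Multiset.esymm, Multiset.powersetCard_one, Multiset.map_map, Function.comp_def]

private lemma my_sum_sq_multiset {R : Type*} [CommRing R] (s : Multiset R) :
    (s.map (·^2)).sum = s.sum^2 - 2 * s.esymm 2 := by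
  induction s using Multiset.induction_on with
  | empty => simp [Multiset.esymm, Multiset.powersetCard_eq_empty 2 (s := (0 : Multiset R)) (by simp)]
  | cons a s ih =>
      have he : (a ::ₘ s).esymm 2 = s.esymm 2 + a * s.sum := by
        show ((Multiset.powersetCard 2 (a ::ₘ s)).map Multiset.prod).sum = _
        rw [show (2:ℕ) = 1 + 1 from rfl, Multiset.powersetCard_cons]
        simp only [Multiset.map_add, Multiset.map_map, Multiset.sum_add,
          Multiset.powersetCard_one, Function.comp_def, Multiset.prod_cons,
          Multiset.prod_singleton]
        rw [Multiset.sum_map_mul_left]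
        norm_num [Multiset.esymm]
      simp only [Multiset.map_cons, Multiset.sum_cons, he, ih]
      ring

private lemma my_re_sum_nonneg (s : Multiset ℂ) (h : ∀ x ∈ s, 0 ≤ x.re) :
    0 ≤ s.sum.re := by
  induction s using Multiset.induction_on with
  | empty => simp
  | cons a s ih =>
      simp only [Multiset.sum_cons, Complex.add_re]
      exact add_nonneg (h a (Multiset.mem_cons_self a s))
        (ih fun x hx => h x (Multiset.mem_cons_of_mem hx))

private lemma my_charpoly_eq (ω₁ ω₂ γ₁ γ₂ k : ℝ) :
    Matrix.charpoly (!![0, 1, 0, 0;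
         -ω₁^2 - k, -γ₁, k, 0;
         0, 0, 0, 1;
         k, 0, -ω₂^2 - k, -γ₂] : Matrix (Fin 4) (Fin 4) ℝ) =
    (X^2 + C γ₁ * X + C (ω₁^2 + k)) * (X^2 + C γ₂ * X + C (ω₂^2 + k)) - C (k^2) := by
  rw [Matrix.charpoly]
  simp [Matrix.det_succ_row_zero, Fin.sum_univ_succ, Matrix.charmatrix_apply,
    Matrix.one_apply, Matrix.diagonal_apply, Fin.succAbove,
    map_add, map_neg, map_sub, map_pow]
  ring

set_option maxHeartbeats 1000000 in
theorem two_real_two_complex_eigenvalues_large_coupling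
    (ω₁ ω₂ γ₁ γ₂ : ℝ) (hω₁ : 0 < ω₁) (hω₂ : 0 < ω₂) (hγ₁ : 0 < γ₁) (hγ₂ : 0 < γ₂)
    (h1 : γ₁^2 - 4*ω₁^2 > 0) (h2 : γ₂^2 - 4*ω₂^2 > 0)
    (h3 : 8*(ω₁^2 + ω₂^2) < (γ₁ + γ₂)^2) :
    ∃ K > (0:ℝ), ∀ k : ℝ, K < k →
      (Matrix.charpoly (!![0, 1, 0, 0;
         -ω₁^2 - k, -γ₁, k, 0;
         0, 0, 0, 1;
         k, 0, -ω₂^2 - k, -γ₂] : Matrix (Fin 4) (Fin 4) ℝ)).roots.toFinset.card = 2 ∧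
      ∃ z : ℂ, z.im ≠ 0 ∧
        aeval z (Matrix.charpoly (!![0, 1, 0, 0;
         -ω₁^2 - k, -γ₁, k, 0;
         0, 0, 0, 1;
         k, 0, -ω₂^2 - k, -γ₂] : Matrix (Fin 4) (Fin 4) ℝ)) = 0 ∧
        aeval ((starRingEnd ℂ) z) (Matrix.charpoly (!![0, 1, 0, 0;
         -ω₁^2 - k, -γ₁, k, 0;
         0, 0, 0, 1;
         k, 0, -ω₂^2 - k, -γ₂] : Matrix (Fin 4) (Fin 4) ℝ)) = 0 := by
  -- abbreviations
  obtain ⟨g, hgdef⟩ : ∃ g : ℝ, g = γ₁ + γ₂ := ⟨_, rfl⟩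
  obtain ⟨S, hSdef⟩ : ∃ S : ℝ, S = ω₁^2 + ω₂^2 := ⟨_, rfl⟩
  have hg0 : 0 < g := by rw [hgdef]; positivity
  have hS0 : 0 < S := by rw [hSdef]; positivity
  have h3' : 8*S < g^2 := by rw [hgdef, hSdef]; linarith
  have hd : 0 < g^2/8 - S := by linarith
  -- the values of the "product part" at the two test points
  obtain ⟨Pa, hPa⟩ : ∃ p : ℝ,
    p = ((-(g/2))^2 + γ₁*(-(g/2)) + ω₁^2) * ((-(g/2))^2 + γ₂*(-(g/2)) + ω₂^2) := ⟨_, rfl⟩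
  obtain ⟨Pb, hPb⟩ : ∃ p : ℝ,
    p = ((-(g/4))^2 + γ₁*(-(g/4)) + ω₁^2) * ((-(g/4))^2 + γ₂*(-(g/4)) + ω₂^2) := ⟨_, rfl⟩
  have hK0 : (0:ℝ) < 1 + g^2 + |Pa|/S + |Pb|/(g^2/8 - S) := by
    have h4 : (0:ℝ) ≤ |Pa|/S := div_nonneg (abs_nonneg _) hS0.le
    have h5 : (0:ℝ) ≤ |Pb|/(g^2/8 - S) := div_nonneg (abs_nonneg _) hd.le
    nlinarith [sq_nonneg g]
  refine ⟨1 + g^2 + |Pa|/S + |Pb|/(g^2/8 - S), hK0, ?_⟩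
  intro k hk
  have h4 : (0:ℝ) ≤ |Pa|/S := div_nonneg (abs_nonneg _) hS0.le
  have h5 : (0:ℝ) ≤ |Pb|/(g^2/8 - S) := div_nonneg (abs_nonneg _) hd.le
  have hk0 : 0 < k := lt_trans hK0 hk
  have fga : |Pa| < k * S := by
    have : |Pa|/S < k := by nlinarith [sq_nonneg g]
    exact (div_lt_iff₀ hS0).mp this
  have fgb : |Pb| < k * (g^2/8 - S) := by
    have : |Pb|/(g^2/8 - S) < k := by nlinarith [sq_nonneg g]
    exact (div_lt_iff₀ hd).mp this
  have fgc : g^2 < k := by linarith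
  obtain ⟨M, hM⟩ : ∃ M' : Matrix (Fin 4) (Fin 4) ℝ, M' = !![0, 1, 0, 0;
         -ω₁^2 - k, -γ₁, k, 0;
         0, 0, 0, 1;
         k, 0, -ω₂^2 - k, -γ₂] := ⟨_, rfl⟩
  rw [← hM]
  have hp : M.charpoly = (X^2 + C γ₁ * X + C (ω₁^2 + k)) * (X^2 + C γ₂ * X + C (ω₂^2 + k))
      - C (k^2) := by rw [hM]; exact my_charpoly_eq ω₁ ω₂ γ₁ γ₂ k
  have hmonic : M.charpoly.Monic := M.charpoly_monic
  have hp0 : M.charpoly ≠ 0 := hmonic.ne_zero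
  have hdeg : M.charpoly.natDegree = 4 := by
    rw [Matrix.charpoly_natDegree_eq_dim]; simp
  have heval : ∀ x : ℝ, eval x M.charpoly =
      (x^2 + γ₁*x + ω₁^2) * (x^2 + γ₂*x + ω₂^2) + k * (2*x^2 + g*x + S) := by
    intro x
    rw [hp, hgdef, hSdef]
    simp only [eval_sub, eval_mul, eval_add, eval_pow, eval_X, eval_C]
    ring
  -- sign values at the three test points
  have heva : 0 < eval (-(g/2)) M.charpoly := by
    have e : eval (-(g/2)) M.charpoly = Pa + k * S := by
      rw [heval, hPa]; ring
    rw [e]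
    have := neg_abs_le Pa
    linarith
  have hevb : eval (-(g/4)) M.charpoly < 0 := by
    have e : eval (-(g/4)) M.charpoly = Pb + k * (S - g^2/8) := by
      rw [heval, hPb]; ring
    rw [e]
    have := le_abs_self Pb
    linarith
  have hevc : 0 < eval 0 M.charpoly := by
    have e : eval (0:ℝ) M.charpoly = ω₁^2 * ω₂^2 + k * S := by
      rw [heval]; ring
    rw [e]; positivity
  -- two real roots by IVT
  have hab : -(g/2) ≤ -(g/4) := by linarith
  have hbc : -(g/4) ≤ (0:ℝ) := by linarith
  have hcont : ∀ u v : ℝ, ContinuousOn (fun x => eval x M.charpoly) (Set.Icc u v) :=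
    fun u v => (M.charpoly.continuous).continuousOn
  obtain ⟨x₁, hx₁mem, hx₁⟩ : ∃ x ∈ Set.Ioo (-(g/2)) (-(g/4)), eval x M.charpoly = 0 := by
    have h0 : (0:ℝ) ∈ Set.Ioo (eval (-(g/4)) M.charpoly) (eval (-(g/2)) M.charpoly) :=
      ⟨hevb, heva⟩
    obtain ⟨x, hx, hfx⟩ := intermediate_value_Ioo' hab (hcont _ _) h0
    exact ⟨x, hx, hfx⟩
  obtain ⟨x₂, hx₂mem, hx₂⟩ : ∃ x ∈ Set.Ioo (-(g/4)) (0:ℝ), eval x M.charpoly = 0 := by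
    have h0 : (0:ℝ) ∈ Set.Ioo (eval (-(g/4)) M.charpoly) (eval 0 M.charpoly) :=
      ⟨hevb, hevc⟩
    obtain ⟨x, hx, hfx⟩ := intermediate_value_Ioo hbc (hcont _ _) h0
    exact ⟨x, hx, hfx⟩
  have hx12 : x₁ ≠ x₂ := ne_of_lt (lt_trans hx₁mem.2 hx₂mem.1)
  -- complex side
  obtain ⟨pC, hpC⟩ : ∃ p : ℂ[X], p = M.charpoly.map (algebraMap ℝ ℂ) := ⟨_, rfl⟩
  have hpCmonic : pC.Monic := by rw [hpC]; exact hmonic.map _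
  have hpC0 : pC ≠ 0 := hpCmonic.ne_zero
  have hpCdeg : pC.natDegree = 4 := by rw [hpC, hmonic.natDegree_map, hdeg]
  have hcard : Multiset.card pC.roots = 4 := by
    rw [← hpCdeg]
    exact splits_iff_card_roots.mp (IsAlgClosed.splits pC)
  -- coefficients of the characteristic polynomial
  have hexp : M.charpoly = X^4 + C g * X^3 + C (S + 2*k + γ₁*γ₂) * X^2
      + C (γ₁*(ω₂^2+k) + γ₂*(ω₁^2+k)) * X + C (ω₁^2*ω₂^2 + k*S) := by
    rw [hp, hgdef, hSdef]
    simp only [map_add, map_mul, map_pow, map_ofNat, C_add, C_mul]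
    ring
  have hc3 : M.charpoly.coeff 3 = g := by
    rw [hexp]
    simp only [coeff_add, coeff_C_mul, coeff_X_pow, coeff_X, coeff_C]
    norm_num
  have hc2 : M.charpoly.coeff 2 = S + 2*k + γ₁*γ₂ := by
    rw [hexp]
    simp only [coeff_add, coeff_C_mul, coeff_X_pow, coeff_X, coeff_C]
    norm_num
  have hpc3 : pC.coeff 3 = (g : ℂ) := by
    rw [hpC, coeff_map, hc3]; rfl
  have hpc2 : pC.coeff 2 = ((S + 2*k + γ₁*γ₂ : ℝ) : ℂ) := by
    rw [hpC, coeff_map, hc2]; rfl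
  -- Vieta
  have hcard' : Multiset.card pC.roots = pC.natDegree := by rw [hcard, hpCdeg]
  have hsum : pC.roots.sum = -(g : ℂ) := by
    have h := Polynomial.coeff_eq_esymm_roots_of_card hcard' (k := 3) (by rw [hpCdeg]; norm_num)
    rw [hpCdeg, hpCmonic.leadingCoeff, hpc3] at h
    norm_num [my_esymm_one] at h
    exact neg_eq_iff_eq_neg.mp h.symm
  have hesymm2 : pC.roots.esymm 2 = ((S + 2*k + γ₁*γ₂ : ℝ) : ℂ) := by
    have h := Polynomial.coeff_eq_esymm_roots_of_card hcard' (k := 2) (by rw [hpCdeg]; norm_num)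
    rw [hpCdeg, hpCmonic.leadingCoeff, hpc2] at h
    norm_num at h
    push_cast
    exact h.symm
  -- existence of a non-real root
  obtain ⟨z, hzmem, hzim⟩ : ∃ z ∈ pC.roots, z.im ≠ 0 := by
    by_contra hcon
    push_neg at hcon
    have hsq := my_sum_sq_multiset pC.roots
    rw [hsum, hesymm2] at hsq
    have hre : 0 ≤ ((pC.roots.map (·^2)).sum).re := by
      apply my_re_sum_nonneg
      intro x hx
      obtain ⟨w, hw, rfl⟩ := Multiset.mem_map.mp hx
      have hwim : w.im = 0 := hcon w hw
      have : (w^2).re = w.re * w.re := by simp [pow_two, Complex.mul_re, hwim]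
      rw [this]
      exact mul_self_nonneg _
    rw [hsq] at hre
    have : ((-(g:ℂ))^2 - 2 * ((S + 2*k + γ₁*γ₂ : ℝ) : ℂ)).re
        = g^2 - 2*(S + 2*k + γ₁*γ₂) := by
      simp [Complex.sub_re, Complex.mul_re, pow_two]
    rw [this] at hre
    linarith [mul_pos hγ₁ hγ₂]
  have hzroot : eval z pC = 0 := (mem_roots hpC0).mp hzmem
  have haez : aeval z M.charpoly = 0 := by
    rw [aeval_def, ← eval_map, ← hpC, hzroot]
  have haezc : aeval ((starRingEnd ℂ) z) M.charpoly = 0 := by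
    rw [Polynomial.aeval_conj, haez, map_zero]
  -- the four roots
  have hmemR : ∀ y : ℝ, eval y M.charpoly = 0 → ((y:ℂ) ∈ pC.roots) := by
    intro y hy
    have hyy : ((y:ℂ)) = algebraMap ℝ ℂ y := rfl
    rw [mem_roots hpC0, IsRoot.def, hpC, hyy, eval_map, Polynomial.eval₂_at_apply, hy, map_zero]
  have hzC : z ∈ pC.roots := hzmem
  have hzconjC : (starRingEnd ℂ) z ∈ pC.roots := by
    rw [mem_roots hpC0]
    have : aeval ((starRingEnd ℂ) z) M.charpoly = eval ((starRingEnd ℂ) z) pC := by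
      rw [aeval_def, ← eval_map, hpC]
    rw [IsRoot.def, ← this, haezc]
  have hx₁C : ((x₁:ℂ)) ∈ pC.roots := hmemR x₁ hx₁
  have hx₂C : ((x₂:ℂ)) ∈ pC.roots := hmemR x₂ hx₂
  -- the multiset of roots is exactly these four
  obtain ⟨T, hT⟩ : ∃ t : Multiset ℂ, t = ({(x₁:ℂ), (x₂:ℂ), z, (starRingEnd ℂ) z} : Multiset ℂ) := ⟨_, rfl⟩
  have hzconjim : ((starRingEnd ℂ) z).im ≠ 0 := by
    simpa using hzim
  have hzne : z ≠ (starRingEnd ℂ) z := by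
    intro h
    apply hzim
    have := congrArg Complex.im h
    simp at this
    linarith
  have hnodup : T.Nodup := by
    rw [hT]
    refine Multiset.nodup_cons.mpr ⟨?_, Multiset.nodup_cons.mpr ⟨?_, Multiset.nodup_cons.mpr
      ⟨?_, Multiset.nodup_singleton _⟩⟩⟩
    · intro h
      rcases Multiset.mem_cons.mp h with h | h
      · exact hx12 (by exact_mod_cast h)
      · rcases Multiset.mem_cons.mp h with h | h
        · exact hzim (by rw [← h]; simp)
        · rw [Multiset.mem_singleton] at h
          exact hzconjim (by rw [← h]; simp)
    · intro h
      rcases Multiset.mem_cons.mp h with h | h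
      · exact hzim (by rw [← h]; simp)
      · rw [Multiset.mem_singleton] at h
        exact hzconjim (by rw [← h]; simp)
    · intro h
      rw [Multiset.mem_singleton] at h
      exact hzne h
  have hsub : T ⊆ pC.roots := by
    intro w hw
    rw [hT] at hw
    rcases Multiset.mem_cons.mp hw with h | h
    · rwa [h]
    rcases Multiset.mem_cons.mp h with h | h
    · rwa [h]
    rcases Multiset.mem_cons.mp h with h | h
    · rwa [h]
    rw [Multiset.mem_singleton] at h
    rwa [h]
  have hTR : T = pC.roots := by
    apply Multiset.eq_of_le_of_card_le ((Multiset.le_iff_subset hnodup).mpr hsub)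
    rw [hcard, hT]
    rfl
  -- real roots are exactly x₁ and x₂
  have hrootsub : ∀ y ∈ M.charpoly.roots, y = x₁ ∨ y = x₂ := by
    intro y hy
    have hy0 : eval y M.charpoly = 0 := (mem_roots hp0).mp hy
    have : (y:ℂ) ∈ T := by rw [hTR]; exact hmemR y hy0
    rw [hT] at this
    rcases Multiset.mem_cons.mp this with h | h
    · left; exact_mod_cast h
    rcases Multiset.mem_cons.mp h with h | h
    · right; exact_mod_cast h
    rcases Multiset.mem_cons.mp h with h | h
    · exact absurd (by rw [← h]; simp : z.im = 0) hzim
    · rw [Multiset.mem_singleton] at h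
      exact absurd (by rw [← h]; simp : ((starRingEnd ℂ) z).im = 0) hzconjim
  have hx₁root : x₁ ∈ M.charpoly.roots := by rw [mem_roots hp0]; exact hx₁
  have hx₂root : x₂ ∈ M.charpoly.roots := by
    rw [mem_roots hp0]; exact hx₂
  have hfin : M.charpoly.roots.toFinset = {x₁, x₂} := by
    ext y
    simp only [Multiset.mem_toFinset, Finset.mem_insert, Finset.mem_singleton]
    constructor
    · exact hrootsub y
    · rintro (rfl | rfl)
      · exact hx₁root
      · exact hx₂root
  refine ⟨?_, z, hzim, haez, haezc⟩
  rw [hfin]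
  rw [Finset.card_insert_of_notMem (by simpa using hx12), Finset.card_singleton]
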